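/- If X1, X2, X3 are independent Uniform(0,1) random variables and ρ > 0, then E[exp(-ρ|X1 - X3|) · exp(-ρ|X2 - X3|)] = (-e^{-2ρ} + 2e^{-ρ}(ρ+4) + 4ρ - 7)/ρ³. -/

import Mathlib

open MeasureTheory Real

/-- The uniform distribution on `[0,1]`. -/
noncomputable def unif : Measure ℝ := volume.restrict (Set.Icc 0 1)

instance : IsProbabilityMeasure unif := ⟨by simp [unif]⟩

open Set in
lemma aux_integrable_bd {α : Type*} [MeasurableSpace α] {μ : Measure α} [IsFiniteMeasure μ]
    {f : α → ℝ} (hf : AEStronglyMeasurable f μ) (h : ∀ a, ‖f a‖ ≤ 1) : Integrable f μ :=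
  (integrable_const (1:ℝ)).mono' hf (ae_of_all _ h)

lemma aux_exp_abs_le (ρ t : ℝ) (hρ : 0 < ρ) : Real.exp (-ρ * |t|) ≤ 1 := by
  rw [Real.exp_le_one_iff]
  have := abs_nonneg t
  nlinarith

open Set in
lemma aux_inner_int (ρ z : ℝ) (hρ : 0 < ρ) (hz : z ∈ Icc (0:ℝ) 1) :
    ∫ x, Real.exp (-ρ * |x - z|) ∂unif
      = (2 - Real.exp (-(ρ*z)) - Real.exp (-(ρ*(1-z))))/ρ := by
  obtain ⟨hz0, hz1⟩ := hz
  rw [unif, integral_Icc_eq_integral_Ioc, ← intervalIntegral.integral_of_le zero_le_one,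
    ← intervalIntegral.integral_add_adjacent_intervals (b := z)
      ((by fun_prop : Continuous fun x => Real.exp (-ρ * |x - z|)).intervalIntegrable _ _)
      ((by fun_prop : Continuous fun x => Real.exp (-ρ * |x - z|)).intervalIntegrable _ _)]
  have h1 : ∫ x in (0:ℝ)..z, Real.exp (-ρ * |x - z|)
      = ∫ x in (0:ℝ)..z, Real.exp (ρ * x + (-(ρ*z))) := by
    apply intervalIntegral.integral_congr
    intro x hx
    rw [Set.uIcc_of_le hz0] at hx
    simp only []
    rw [abs_of_nonpos (by linarith [hx.2])]
    ring_nf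
  have h2 : ∫ x in z..(1:ℝ), Real.exp (-ρ * |x - z|)
      = ∫ x in z..(1:ℝ), Real.exp (-ρ * x + ρ*z) := by
    apply intervalIntegral.integral_congr
    intro x hx
    rw [Set.uIcc_of_le hz1] at hx
    simp only []
    rw [abs_of_nonneg (by linarith [hx.1])]
    ring_nf
  rw [h1, h2, intervalIntegral.integral_comp_mul_add Real.exp (ne_of_gt hρ),
    intervalIntegral.integral_comp_mul_add Real.exp (by linarith : -ρ ≠ 0),
    integral_exp, integral_exp]
  have h3 : ρ ≠ 0 := hρ.ne'
  field_simp
  ring_nf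
  rw [Real.exp_zero]
  linear_combination (2 - rexp (-(ρ * z)) - rexp (-ρ + ρ * z)) * mul_inv_cancel₀ h3

lemma aux_exp_int (c d : ℝ) (hc : c ≠ 0) :
    ∫ z in (0:ℝ)..1, Real.exp (c*z + d) = (Real.exp (c+d) - Real.exp d)/c := by
  rw [intervalIntegral.integral_comp_mul_add Real.exp hc d, integral_exp]
  simp only [mul_one, mul_zero, zero_add, smul_eq_mul]
  field_simp

open Set in
lemma aux_outer (ρ : ℝ) (hρ : 0 < ρ) :
    ∫ z, (∫ a, Real.exp (-ρ*|a - z|) ∂unif) * (∫ a, Real.exp (-ρ*|a - z|) ∂unif) ∂unif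
      = (-Real.exp (-(2 * ρ)) + 2 * Real.exp (-ρ) * (ρ + 4) + 4 * ρ - 7) / ρ ^ 3 := by
  have h3 : ρ ≠ 0 := hρ.ne'
  have step1 : ∫ z, (∫ a, Real.exp (-ρ*|a - z|) ∂unif) * (∫ a, Real.exp (-ρ*|a - z|) ∂unif) ∂unif
      = ∫ z in Icc (0:ℝ) 1,
          ((2 - Real.exp (-(ρ*z)) - Real.exp (-(ρ*(1-z))))/ρ)
            * ((2 - Real.exp (-(ρ*z)) - Real.exp (-(ρ*(1-z))))/ρ) := by
    rw [show (∫ z, (∫ a, Real.exp (-ρ*|a - z|) ∂unif) * (∫ a, Real.exp (-ρ*|a - z|) ∂unif) ∂unif)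
        = ∫ z in Icc (0:ℝ) 1,
            (∫ a, Real.exp (-ρ*|a - z|) ∂unif) * (∫ a, Real.exp (-ρ*|a - z|) ∂unif) from rfl]
    apply setIntegral_congr_fun measurableSet_Icc
    intro z hz
    simp only []
    rw [aux_inner_int ρ z hρ hz]
  rw [step1, integral_Icc_eq_integral_Ioc, ← intervalIntegral.integral_of_le zero_le_one]
  have hpt : EqOn
      (fun z => ((2 - Real.exp (-(ρ*z)) - Real.exp (-(ρ*(1-z))))/ρ)
            * ((2 - Real.exp (-(ρ*z)) - Real.exp (-(ρ*(1-z))))/ρ))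
      (fun z => (ρ⁻¹^2 * (4 + 2*Real.exp (-ρ)) + ρ⁻¹^2 * Real.exp ((-(2*ρ))*z + 0)
          + ρ⁻¹^2 * Real.exp ((2*ρ)*z + (-(2*ρ))))
        - (4*ρ⁻¹^2) * Real.exp ((-ρ)*z + 0) - (4*ρ⁻¹^2) * Real.exp (ρ*z + (-ρ)))
      (uIcc (0:ℝ) 1) := by
    intro z _
    simp only []
    have hab : rexp (-(ρ*z)) * rexp (-(ρ*(1-z))) = rexp (-ρ) := by
      rw [← Real.exp_add]; ring_nf
    have haa : rexp (-(ρ*z)) * rexp (-(ρ*z)) = rexp ((-(2*ρ))*z + 0) := by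
      rw [← Real.exp_add]; ring_nf
    have hbb : rexp (-(ρ*(1-z))) * rexp (-(ρ*(1-z))) = rexp ((2*ρ)*z + (-(2*ρ))) := by
      rw [← Real.exp_add]; ring_nf
    have ha : rexp (-(ρ*z)) = rexp ((-ρ)*z + 0) := by ring_nf
    have hb : rexp (-(ρ*(1-z))) = rexp (ρ*z + (-ρ)) := by ring_nf
    linear_combination (haa + hbb + 2*hab - 4*ha - 4*hb)/ρ^2
  rw [intervalIntegral.integral_congr hpt]
  have hI : ∀ (c d : ℝ), IntervalIntegrable (fun z => Real.exp (c*z+d)) volume 0 1 :=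
    fun c d => (by fun_prop : Continuous fun z => Real.exp (c*z+d)).intervalIntegrable _ _
  rw [intervalIntegral.integral_sub (by
        apply IntervalIntegrable.sub
        · exact ((intervalIntegrable_const.add ((hI _ _).const_mul _)).add ((hI _ _).const_mul _))
        · exact (hI _ _).const_mul _) ((hI _ _).const_mul _),
    intervalIntegral.integral_sub
      ((intervalIntegrable_const.add ((hI _ _).const_mul _)).add ((hI _ _).const_mul _))
      ((hI _ _).const_mul _),
    intervalIntegral.integral_add (intervalIntegrable_const.add ((hI _ _).const_mul _))
      ((hI _ _).const_mul _),
    intervalIntegral.integral_add intervalIntegrable_const ((hI _ _).const_mul _),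
    intervalIntegral.integral_const,
    intervalIntegral.integral_const_mul, intervalIntegral.integral_const_mul,
    intervalIntegral.integral_const_mul, intervalIntegral.integral_const_mul,
    aux_exp_int _ _ (by linarith : -(2*ρ) ≠ 0), aux_exp_int _ _ (by linarith : 2*ρ ≠ 0),
    aux_exp_int _ _ (by linarith : -ρ ≠ 0), aux_exp_int _ _ h3]
  have e1 : (-(2*ρ) + 0) = -(2*ρ) := by ring
  have e2 : (2*ρ + -(2*ρ)) = 0 := by ring
  have e3 : (-ρ + 0) = -ρ := by ring
  have e4 : (ρ + -ρ) = 0 := by ring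
  rw [e1, e2, e3, e4, Real.exp_zero]
  field_simp
  ring
  linear_combination (4 * rexp (-ρ) + 8) * (ρ * (ρ * ρ⁻¹ + 1)) * mul_inv_cancel₀ h3

theorem expectation_triple_exp_abs_diff_uniform (ρ : ℝ) (hρ : 0 < ρ) :
    ∫ p : Fin 3 → ℝ,
        Real.exp (-ρ * |p 0 - p 2|) * Real.exp (-ρ * |p 1 - p 2|)
          ∂(Measure.pi fun _ => unif)
      = (-Real.exp (-(2 * ρ)) + 2 * Real.exp (-ρ) * (ρ + 4) + 4 * ρ - 7) / ρ ^ 3 := by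
  rw [← MeasurePreserving.integral_comp'
    (MeasurePreserving.symm (MeasurableEquiv.piFinSuccAbove (fun _ : Fin 3 => ℝ) 2)
      (MeasureTheory.measurePreserving_piFinSuccAbove (fun _ : Fin 3 => unif) 2))]
  simp_rw [MeasurableEquiv.piFinSuccAbove_symm_apply, Fin.insertNthEquiv, Equiv.coe_fn_mk]
  have h0 : (2 : Fin 3) = Fin.last 2 := rfl
  have h1 : (0 : Fin 3) = Fin.castSucc 0 := rfl
  have h2 : (1 : Fin 3) = Fin.castSucc 1 := rfl
  simp_rw [h0, Fin.insertNth_last, h1, h2, Fin.snoc_castSucc, Fin.snoc_last, cast_eq]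
  have hcont : Continuous fun x : ℝ × (Fin 2 → ℝ) =>
      Real.exp (-ρ * |x.2 0 - x.1|) * Real.exp (-ρ * |x.2 1 - x.1|) := by fun_prop
  have hbd : ∀ x : ℝ × (Fin 2 → ℝ),
      ‖Real.exp (-ρ * |x.2 0 - x.1|) * Real.exp (-ρ * |x.2 1 - x.1|)‖ ≤ 1 := by
    intro x
    rw [norm_mul, Real.norm_eq_abs, Real.norm_eq_abs, abs_of_pos (Real.exp_pos _),
      abs_of_pos (Real.exp_pos _)]
    calc rexp (-ρ * |x.2 0 - x.1|) * rexp (-ρ * |x.2 1 - x.1|)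
        ≤ 1 * 1 := by
          apply mul_le_mul (aux_exp_abs_le ρ _ hρ) (aux_exp_abs_le ρ _ hρ)
            (Real.exp_pos _).le one_pos.le
      _ = 1 := by ring
  rw [MeasureTheory.integral_prod _ (aux_integrable_bd hcont.aestronglyMeasurable hbd)]
  have hinner : ∀ z : ℝ,
      (∫ q : Fin 2 → ℝ, Real.exp (-ρ * |q 0 - z|) * Real.exp (-ρ * |q 1 - z|)
          ∂(Measure.pi fun _ => unif))
        = (∫ a, Real.exp (-ρ*|a - z|) ∂unif) * (∫ a, Real.exp (-ρ*|a - z|) ∂unif) := by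
    intro z
    rw [← MeasurePreserving.integral_comp'
      (MeasurePreserving.symm MeasurableEquiv.finTwoArrow
        (MeasureTheory.measurePreserving_finTwoArrow unif))]
    simp only [MeasurableEquiv.finTwoArrow, MeasurableEquiv.piFinTwo_symm_apply,
      Fin.cons_zero, Fin.cons_one]
    exact MeasureTheory.integral_prod_mul (f := fun a => rexp (-ρ*|a - z|))
      (g := fun a => rexp (-ρ*|a - z|)) (μ := unif) (ν := unif)
  simp_rw [hinner]
  exact aux_outer ρ hρ
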